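/- Let A be an associative unital ℂ-algebra with elements T_1,…,T_{k-1}, P_1,…,P_k satisfying the Hecke relations T_i² = (q−q⁻¹)T_i + 1, braid relations T_i T_{i+1} T_i = T_{i+1} T_i T_{i+1}, commutation T_i T_j = T_j T_i for |i−j|>1, the recursion P_{i+1} = q(P_i T_i P_i − (q−q⁻¹)P_i), and suppose that for a fixed index i>1 the inductive hypotheses hold: P_i P_j = P_j P_i = P_i for 1 ≤ j < i, P_i² = P_i, P_i T_j = T_j P_i = q P_i for 1 ≤ j < i, and P_m T_j = T_j P_m for m < j. Then P_{i+1}² = P_{i+1}. -/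
import Mathlib


/-- Inductive step: under the Hecke relations, the recursion
`P_{i+1} = q(P_i T_i P_i - (q - q⁻¹)P_i)`, and the inductive hypotheses
(E1)-(E4) at a fixed index `i > 1`, the element `P_{i+1}` is idempotent. -/
theorem stmt7 {A : Type*} [Ring A] [Algebra ℂ A] (k : ℕ) (q : ℂ) (hq : q ≠ 0)
    (T P : ℕ → A)
    (hA1 : ∀ m, 1 ≤ m → m + 1 ≤ k → T m * T m = (q - q⁻¹) • T m + 1)
    (hA2 : ∀ m, 1 ≤ m → m + 2 ≤ k → T m * T (m+1) * T m = T (m+1) * T m * T (m+1))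
    (hA3 : ∀ m j, 1 ≤ m → m + 1 < j → j + 1 ≤ k → T m * T j = T j * T m)
    (hrec : ∀ m, 1 ≤ m → m + 1 ≤ k → P (m+1) = q • (P m * T m * P m - (q - q⁻¹) • P m))
    (i : ℕ) (hi : 1 < i) (hik : i + 1 ≤ k)
    (hE2 : ∀ j, 1 ≤ j → j < i → P i * P j = P i ∧ P j * P i = P i)
    (hE3 : P i * P i = P i)
    (hE4 : ∀ j, 1 ≤ j → j < i → P i * T j = q • P i ∧ T j * P i = q • P i)
    (hE1 : ∀ m j, 1 ≤ m → m < j → j + 1 ≤ k → P m * T j = T j * P m) :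
    P (i+1) * P (i+1) = P (i+1) := by
  obtain ⟨j, rfl⟩ : ∃ j, i = j + 1 := ⟨i - 1, by omega⟩
  set a := P (j+1) with ha
  set b := P j with hbdef
  set t := T (j+1) with ht
  set s := T j with hs
  -- hypotheses at index j
  have hb : a = q • (b * s * b - (q - q⁻¹) • b) := hrec j (by omega) (by omega)
  have hrec2 : P (j+1+1) = q • (a * t * a - (q - q⁻¹) • a) := hrec (j+1) (by omega) (by omega)
  have hcomm : b * t = t * b := hE1 j (j+1) (by omega) (by omega) (by omega)
  have hA1' : t * t = (q - q⁻¹) • t + 1 := hA1 (j+1) (by omega) (by omega)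
  have braid : s * t * s = t * s * t := hA2 j (by omega) (by omega)
  have hab : a * b = a := (hE2 j (by omega) (by omega)).1
  have hba : b * a = a := (hE2 j (by omega) (by omega)).2
  have has : a * s = q • a := (hE4 j (by omega) (by omega)).1
  have hsa : s * a = q • a := (hE4 j (by omega) (by omega)).2
  have haa : a * a = a := hE3
  -- generalized rewriting lemmas
  have g1 : ∀ x : A, a * (a * x) = a * x := fun x => by rw [← mul_assoc, haa]
  have g2 : ∀ x : A, a * (b * x) = a * x := fun x => by rw [← mul_assoc, hab]
  have g4 : ∀ x : A, a * (s * x) = q • (a * x) := fun x => by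
    rw [← mul_assoc, has, smul_mul_assoc]
  have g6 : ∀ x : A, t * (b * x) = b * (t * x) := fun x => by
    rw [← mul_assoc, ← hcomm, mul_assoc]
  have gb : ∀ x : A, t * (s * (t * x)) = s * (t * (s * x)) := fun x => by
    simp only [← mul_assoc]; rw [← braid]
  have ghk : ∀ x : A, t * (t * x) = (q - q⁻¹) • (t * x) + x := fun x => by
    rw [← mul_assoc, hA1', add_mul, smul_mul_assoc, one_mul]
  -- key computation: t * a * t
  have key : t * (a * t) =
      q • (b * (s * (t * (s * b)))) - (q * ((q - q⁻¹) * (q - q⁻¹))) • (b * t)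
        - (q * (q - q⁻¹)) • b := by
    rw [hb]
    simp only [smul_mul_assoc, mul_smul_comm, sub_mul, mul_sub, smul_sub, smul_smul,
      mul_assoc, g6, hcomm, gb, ghk, hA1', mul_add, mul_one, smul_add, add_mul, one_mul]
    module
  -- main computation: a * t * a * t * a
  have X : a * (t * (a * (t * a))) =
      (q * (q * q) - q * ((q - q⁻¹) * (q - q⁻¹))) • (a * (t * a)) - (q * (q - q⁻¹)) • a := by
    have e : a * (t * (a * (t * a))) = a * ((t * (a * t)) * a) := by
      simp only [mul_assoc]
    rw [e, key]
    simp only [smul_mul_assoc, mul_smul_comm, sub_mul, mul_sub, smul_sub, smul_smul,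
      mul_assoc, hba, hsa, g2, g4, hab, haa]
    module
  -- conclude
  rw [hrec2]
  simp only [smul_mul_assoc, mul_smul_comm, sub_mul, mul_sub, smul_sub, smul_smul,
    mul_assoc, g1, haa]
  rw [X]
  match_scalars <;> field_simp <;> ring
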